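/- Let n ≥ 4 and let B be a symmetric n×n real matrix with B_ij = 0 for all pairs (i,j) with i ≠ j except possibly (1,2) and (2,1), and with B_12 ≠ 0. Suppose B satisfies, for all distinct i, j, k: B_ii B_jk − B_ij B_ik + (1/(n−2)) Σ_m B_jm B_km = 0. Then B_αα = −(B_11 + B_22)/(n−2) for every α ≥ 3, and consequently the trace of B is zero. -/
import Mathlib


open Matrix BigOperators

/-- If `B` is a symmetric `n×n` matrix (`n ≥ 4`) whose only possibly nonzero
off-diagonal entries are `B₀₁ = B₁₀ ≠ 0`, and `B` satisfies
`B_ii B_jk − B_ij B_ik + (1/(n−2)) Σ_m B_jm B_km = 0` for all distinct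
`i, j, k`, then `B_αα = −(B₀₀ + B₁₁)/(n−2)` for every index `α ≥ 2`, and
consequently `trace B = 0`. -/
theorem stmt3 (n : ℕ) (hn : 4 ≤ n) (B : Matrix (Fin n) (Fin n) ℝ)
    (hsym : B.IsSymm)
    (hoff : ∀ i j : Fin n, i ≠ j → ¬((i : ℕ) = 0 ∧ (j : ℕ) = 1) →
      ¬((i : ℕ) = 1 ∧ (j : ℕ) = 0) → B i j = 0)
    (h12 : B ⟨0, by omega⟩ ⟨1, by omega⟩ ≠ 0)
    (hid : ∀ i j k : Fin n, i ≠ j → j ≠ k → i ≠ k →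
      B i i * B j k - B i j * B i k
        + (1 / ((n : ℝ) - 2)) * ∑ m, B j m * B k m = 0) :
    (∀ α : Fin n, 2 ≤ (α : ℕ) →
      B α α = -(B ⟨0, by omega⟩ ⟨0, by omega⟩ + B ⟨1, by omega⟩ ⟨1, by omega⟩)
        / ((n : ℝ) - 2)) ∧
    Matrix.trace B = 0 := by
  have hnR : (4:ℝ) ≤ (n:ℝ) := by exact_mod_cast hn
  have hn2 : ((n:ℝ) - 2) ≠ 0 := by linarith
  set i0 : Fin n := ⟨0, by omega⟩ with hi0
  set i1 : Fin n := ⟨1, by omega⟩ with hi1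
  have h01 : i0 ≠ i1 := by simp [hi0, hi1, Fin.ext_iff]
  have hsymm : B i1 i0 = B i0 i1 := by
    have := hsym
    rw [Matrix.IsSymm] at this
    calc B i1 i0 = Bᵀ i0 i1 := rfl
    _ = B i0 i1 := by rw [this]
  have hsum : ∑ m, B i0 m * B i1 m = B i0 i1 * (B i0 i0 + B i1 i1) := by
    have e1 : ∑ m, B i0 m * B i1 m
        = ∑ m ∈ ({i0, i1} : Finset (Fin n)), B i0 m * B i1 m := by
      refine (Finset.sum_subset (Finset.subset_univ _) ?_).symm
      intro m _ hm
      simp only [Finset.mem_insert, Finset.mem_singleton, not_or] at hm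
      have hm0 : (m:ℕ) ≠ 0 := by
        intro h; exact hm.1 (by simp [hi0, Fin.ext_iff, h])
      have hm1 : (m:ℕ) ≠ 1 := by
        intro h; exact hm.2 (by simp [hi1, Fin.ext_iff, h])
      have : B i0 m = 0 := by
        apply hoff i0 m (Ne.symm hm.1)
        · simp [hi0]; omega
        · simp [hi0]
      rw [this, zero_mul]
    rw [e1, Finset.sum_pair h01, hsymm]
    ring
  have key : ∀ α : Fin n, 2 ≤ (α:ℕ) →
      B α α = -(B i0 i0 + B i1 i1) / ((n:ℝ) - 2) := by
    intro α hα
    have hα0 : α ≠ i0 := by simp [hi0, Fin.ext_iff]; omega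
    have hα1 : α ≠ i1 := by simp [hi1, Fin.ext_iff]; omega
    have hB0 : B α i0 = 0 := by
      apply hoff α i0 hα0
      · simp [hi0]
      · simp [hi0]; omega
    have hB1 : B α i1 = 0 := by
      apply hoff α i1 hα1
      · simp [hi1]; omega
      · simp [hi1]
    have h := hid α i0 i1 hα0 h01 hα1
    rw [hsum, hB0, hB1] at h
    have hx : B i0 i1 * (B α α * ((n:ℝ)-2) + (B i0 i0 + B i1 i1)) = 0 := by
      have e : B i0 i1 * (B α α * ((n:ℝ)-2) + (B i0 i0 + B i1 i1))
          = ((n:ℝ)-2) * (B α α * B i0 i1 - 0 * 0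
            + (1 / ((n:ℝ)-2)) * (B i0 i1 * (B i0 i0 + B i1 i1))) := by
        field_simp
        ring
      rw [e, h, mul_zero]
    have hz : B α α * ((n:ℝ)-2) + (B i0 i0 + B i1 i1) = 0 :=
      (mul_eq_zero.mp hx).resolve_left h12
    field_simp
    linarith
  refine ⟨key, ?_⟩
  have hsub : ({i0, i1} : Finset (Fin n)) ⊆ Finset.univ := Finset.subset_univ _
  have hsplit : Matrix.trace B
      = ∑ i ∈ (Finset.univ \ {i0, i1}), B i i + ∑ i ∈ ({i0, i1} : Finset (Fin n)), B i i := by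
    rw [Matrix.trace, Finset.sum_sdiff hsub]; rfl
  have hconst : ∀ i ∈ (Finset.univ \ ({i0, i1} : Finset (Fin n))),
      B i i = -(B i0 i0 + B i1 i1) / ((n:ℝ) - 2) := by
    intro i hi
    simp only [Finset.mem_sdiff, Finset.mem_insert, Finset.mem_singleton, not_or] at hi
    apply key
    have h0 : (i:ℕ) ≠ 0 := fun h => hi.2.1 (by simp [hi0, Fin.ext_iff, h])
    have h1 : (i:ℕ) ≠ 1 := fun h => hi.2.2 (by simp [hi1, Fin.ext_iff, h])
    omega
  have hcard : (Finset.univ \ ({i0, i1} : Finset (Fin n))).card = n - 2 := by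
    rw [Finset.card_sdiff_of_subset hsub]
    simp [Finset.card_pair h01]
  rw [hsplit, Finset.sum_congr rfl hconst, Finset.sum_const, hcard,
    Finset.sum_pair h01]
  have hc : ((n - 2 : ℕ) : ℝ) = (n:ℝ) - 2 := by
    have : 2 ≤ n := by omega
    push_cast [this]
    ring
  rw [nsmul_eq_mul, hc]
  field_simp
  ring
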